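/- Let J ⊆ K⟨X_1,…,X_n⟩ be any two-sided ideal containing the anti-commutator ideal C. Then there exists d ≥ 0 such that in_{≺_t}(J) contains every word of length ≥ d; consequently in_{≺_t}(J) is generated by its elements of degree < d and is finitely generated. -/

import Mathlib

open scoped BigOperators

/-- Words in the letters `X_1, …, X_n`: the free monoid on `Fin n`. -/
abbrev Word (n : ℕ) := FreeMonoid (Fin n)

/-- The free associative algebra `K⟨X_1,…,X_n⟩`, as the monoid algebra of the free monoid. -/
abbrev FA (K : Type) [Field K] (n : ℕ) := MonoidAlgebra K (Word n)

/-- The word `w`, viewed as an element of `K⟨X_1,…,X_n⟩`. -/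
noncomputable def ofW (K : Type) [Field K] {n : ℕ} (w : Word n) : FA K n :=
  MonoidAlgebra.of K (Word n) w

/-- The variable `X_i`. -/
noncomputable def Xv (K : Type) [Field K] {n : ℕ} (i : Fin n) : FA K n :=
  ofW K (FreeMonoid.of i)

/-- The set of anti-commutators `X_iX_j + X_jX_i`, `i ≤ j`. -/
def antiCommSet (K : Type) [Field K] (n : ℕ) : Set (FA K n) :=
  { f | ∃ i j : Fin n, i ≤ j ∧ f = Xv K i * Xv K j + Xv K j * Xv K i }

/-- The anti-commutator ideal `C`. -/
noncomputable def antiCommIdeal (K : Type) [Field K] (n : ℕ) : TwoSidedIdeal (FA K n) :=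
  TwoSidedIdeal.span (antiCommSet K n)

/-- The exterior algebra `E(V)` as the quotient of `K⟨X_1,…,X_n⟩` by `C`. -/
abbrev EV (K : Type) [Field K] (n : ℕ) := (antiCommIdeal K n).ringCon.Quotient

/-- The quotient map `π : K⟨X_1,…,X_n⟩ → E(V)`. -/
noncomputable def piE (K : Type) [Field K] (n : ℕ) : FA K n →+* EV K n :=
  RingCon.mk' _

noncomputable instance (K : Type) [Field K] (n : ℕ) : Module K (EV K n) :=
  { (inferInstance : DistribMulAction K (EV K n)) with
    add_smul := fun a b f => by
      obtain ⟨x, rfl⟩ := Quotient.mk''_surjective f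
      show (((a + b) • x : FA K n) : EV K n) = ((a • x : FA K n) : EV K n) + ((b • x : FA K n) : EV K n)
      rw [← RingCon.coe_add, add_smul]
    zero_smul := fun f => by
      obtain ⟨x, rfl⟩ := Quotient.mk''_surjective f
      show (((0 : K) • x : FA K n) : EV K n) = ((0 : FA K n) : EV K n)
      rw [zero_smul] }

/-- The sorted word associated to a finite set of indices. -/
def wordOf {n : ℕ} (A : Finset (Fin n)) : Word n :=
  FreeMonoid.ofList (A.sort (· ≤ ·))

/-- The square-free monomial `x_A ∈ E(V)`. -/
noncomputable def xF (K : Type) [Field K] {n : ℕ} (A : Finset (Fin n)) : EV K n :=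
  piE K n (ofW K (wordOf A))

/-- A monoid well-order on the free commutative monoid on `x_1,…,x_n`
(identified additively with `Fin n →₀ ℕ`): a total, well-founded, translation
invariant strict order. -/
structure IsCommMonoidWellOrder (n : ℕ) (r : (Fin n →₀ ℕ) → (Fin n →₀ ℕ) → Prop) : Prop where
  trans : Transitive r
  irrefl : ∀ a, ¬ r a a
  total : ∀ a b, r a b ∨ a = b ∨ r b a
  wf : WellFounded r
  mul_compat : ∀ a b c, r a b → r (a + c) (b + c)

/-- A monoid well-order on the free monoid `⟨X_1,…,X_n⟩`. -/
structure IsMonoidWellOrder (n : ℕ) (r : Word n → Word n → Prop) : Prop where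
  trans : Transitive r
  irrefl : ∀ a, ¬ r a a
  total : ∀ a b, r a b ∨ a = b ∨ r b a
  wf : WellFounded r
  mul_compat : ∀ a b p q, r a b → r (p * a * q) (p * b * q)

/-- A finite set of indices, viewed as a square-free element of the free
commutative monoid. -/
noncomputable def sqMon {n : ℕ} (A : Finset (Fin n)) : Fin n →₀ ℕ :=
  Multiset.toFinsupp (A.val)

/-- The restriction `≺_e` of the order `≺_s` (given by `es`) to square-free monomials,
identified with finite subsets of `{1,…,n}`. -/
def precE {n : ℕ} (es : (Fin n →₀ ℕ) → (Fin n →₀ ℕ) → Prop)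
    (A B : Finset (Fin n)) : Prop :=
  es (sqMon A) (sqMon B)

/-- The degree-lexicographic order on words, with `X_1 < X_2 < ⋯ < X_n`. -/
def degLex {n : ℕ} (M N : Word n) : Prop :=
  (FreeMonoid.toList M).length < (FreeMonoid.toList N).length ∨
    ((FreeMonoid.toList M).length = (FreeMonoid.toList N).length ∧
      List.Lex (· < ·) (FreeMonoid.toList M) (FreeMonoid.toList N))

/-- The set of letters of a word. -/
def lettersOf {n : ℕ} (M : Word n) : Finset (Fin n) :=
  (FreeMonoid.toList M).toFinset

/-- A word is square-free iff no letter is repeated; equivalently `π(M) ≠ 0` in `E(V)`. -/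
def SqFreeWord {n : ℕ} (M : Word n) : Prop :=
  (FreeMonoid.toList M).Nodup

/-- The order `≺_t` on words: square-free words are compared first by the `≺_e`-order on
their underlying square-free commutative monomials, ties broken degree-lexicographically;
words mapping to `0` in the exterior algebra are compared degree-lexicographically. -/
def precT {n : ℕ} (es : (Fin n →₀ ℕ) → (Fin n →₀ ℕ) → Prop) (M N : Word n) : Prop :=
  (SqFreeWord M ∧ SqFreeWord N ∧
    (precE es (lettersOf M) (lettersOf N) ∨ (lettersOf M = lettersOf N ∧ degLex M N)))
  ∨ ((¬ SqFreeWord M ∨ ¬ SqFreeWord N) ∧ degLex M N)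

/-- `m` is the `r`-largest word occurring in `f` with nonzero coefficient. -/
def IsLeadWord {K : Type} [Field K] {n : ℕ} (r : Word n → Word n → Prop)
    (f : FA K n) (m : Word n) : Prop :=
  m ∈ f.coeff.support ∧ ∀ m' ∈ f.coeff.support, m' ≠ m → r m' m

/-- The initial ideal `in_r(J)` of a two-sided ideal `J ⊆ K⟨X_1,…,X_n⟩`: the two-sided
ideal generated by the leading words of the nonzero elements of `J`. -/
noncomputable def inIdeal {K : Type} [Field K] {n : ℕ} (r : Word n → Word n → Prop)
    (J : TwoSidedIdeal (FA K n)) : TwoSidedIdeal (FA K n) :=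
  TwoSidedIdeal.span { g | ∃ f m, f ∈ J ∧ f ≠ 0 ∧ IsLeadWord r f m ∧ g = ofW K m }

/-- `G` is a Gröbner basis of `J` w.r.t. `r`: `G` consists of nonzero elements of `J`
whose leading words generate `in_r(J)`. -/
def IsGB {K : Type} [Field K] {n : ℕ} (r : Word n → Word n → Prop)
    (J : TwoSidedIdeal (FA K n)) (G : Set (FA K n)) : Prop :=
  (∀ g ∈ G, g ∈ J ∧ g ≠ 0) ∧
  TwoSidedIdeal.span { h | ∃ g ∈ G, ∃ m, IsLeadWord r g m ∧ h = ofW K m } = inIdeal r J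

/-- `G` is a minimal Gröbner basis: no leading word of an element of `G` is a subword
(factor) of the leading word of another element. -/
def IsMinGB {K : Type} [Field K] {n : ℕ} (r : Word n → Word n → Prop)
    (J : TwoSidedIdeal (FA K n)) (G : Set (FA K n)) : Prop :=
  IsGB r J G ∧
  ∀ g ∈ G, ∀ g' ∈ G, g ≠ g' → ∀ m m', IsLeadWord r g m → IsLeadWord r g' m' →
    ¬ (FreeMonoid.toList m <:+: FreeMonoid.toList m')

/-- An element of `K⟨X_1,…,X_n⟩` is homogeneous of degree `d`. -/
def IsHomogOfDeg {K : Type} [Field K] {n : ℕ} (f : FA K n) (d : ℕ) : Prop :=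
  ∀ w ∈ f.coeff.support, (FreeMonoid.toList w).length = d

/-- `L ⊆ E(V)` is a monomial ideal: it is generated by square-free monomials. -/
def IsMonomialIdealE {K : Type} [Field K] {n : ℕ} (L : TwoSidedIdeal (EV K n)) : Prop :=
  ∃ S : Set (Finset (Fin n)), L = TwoSidedIdeal.span (xF K '' S)

/-- The set `U_L(m)` for `m = x_A`: square-free monomials `u` in the variables strictly
between `min A` and `max A` such that `u·(m/x_{min A}) ∉ L` and `u·(m/x_{max A}) ∉ L`. -/
noncomputable def UL {K : Type} [Field K] {n : ℕ} (L : TwoSidedIdeal (EV K n))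
    (A : Finset (Fin n)) : Set (Finset (Fin n)) :=
  { u | ∃ hA : A.Nonempty,
      (∀ i ∈ u, A.min' hA < i ∧ i < A.max' hA) ∧
      xF K u * xF K (A.erase (A.min' hA)) ∉ L ∧
      xF K u * xF K (A.erase (A.max' hA)) ∉ L }

/-- `x_A` is a minimal (monomial) generator of the monomial ideal `L`. -/
def IsMinGenE {K : Type} [Field K] {n : ℕ} (L : TwoSidedIdeal (EV K n))
    (A : Finset (Fin n)) : Prop :=
  xF K A ∈ L ∧ ∀ B ⊆ A, B ≠ A → xF K B ∉ L

/-- `L` is squeezed: `U_L(m) = {1}` for every minimal generator `m` of `L`. -/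
def IsSqueezed {K : Type} [Field K] {n : ℕ} (L : TwoSidedIdeal (EV K n)) : Prop :=
  ∀ A : Finset (Fin n), IsMinGenE L A → UL L A = {∅}

/-- `L` is stable: if `m ∈ L` and `x_j` is the largest variable dividing `m`,
then `x_i·(m/x_j) ∈ L` for all `i ≤ j`. -/
def IsStableE {K : Type} [Field K] {n : ℕ} (L : TwoSidedIdeal (EV K n)) : Prop :=
  ∀ A : Finset (Fin n), ∀ hA : A.Nonempty, xF K A ∈ L →
    ∀ i ≤ A.max' hA, xF K {i} * xF K (A.erase (A.max' hA)) ∈ L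

/-- `L` is strongly stable: if `m ∈ L` and `x_j` divides `m`, then
`x_i·(m/x_j) ∈ L` for all `i ≤ j` with `x_i·(m/x_j) ≠ 0`. -/
def IsStronglyStableE {K : Type} [Field K] {n : ℕ} (L : TwoSidedIdeal (EV K n)) : Prop :=
  ∀ A : Finset (Fin n), xF K A ∈ L → ∀ j ∈ A, ∀ i ≤ j,
    xF K {i} * xF K (A.erase j) ≠ 0 → xF K {i} * xF K (A.erase j) ∈ L

/-- `δ` is the canonical `K`-linear section of `π`, sending `x_{i_1}⋯x_{i_r}` to
`X_{i_1}⋯X_{i_r}` for `i_1 < ⋯ < i_r`. -/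
def IsDeltaSection {K : Type} [Field K] {n : ℕ} (δ : EV K n →ₗ[K] FA K n) : Prop :=
  ∀ A : Finset (Fin n), δ (xF K A) = ofW K (wordOf A)

/-- `x_A` is the `≺_e`-leading monomial of `0 ≠ f ∈ E(V)`, computed via the canonical
representative `δ f`. -/
def IsLeadE {K : Type} [Field K] {n : ℕ} (es : (Fin n →₀ ℕ) → (Fin n →₀ ℕ) → Prop)
    (δ : EV K n →ₗ[K] FA K n) (f : EV K n) (A : Finset (Fin n)) : Prop :=
  wordOf A ∈ (δ f).coeff.support ∧
  ∀ w ∈ (δ f).coeff.support, w ≠ wordOf A → precE es (lettersOf w) A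

/-- The initial ideal `in_{≺_e}(I)` of an ideal `I ⊆ E(V)`. -/
noncomputable def inE {K : Type} [Field K] {n : ℕ}
    (es : (Fin n →₀ ℕ) → (Fin n →₀ ℕ) → Prop) (δ : EV K n →ₗ[K] FA K n)
    (I : TwoSidedIdeal (EV K n)) : TwoSidedIdeal (EV K n) :=
  TwoSidedIdeal.span { h | ∃ f A, f ∈ I ∧ f ≠ 0 ∧ IsLeadE es δ f A ∧ h = xF K A }

/-- `G` is a Gröbner basis of `I ⊆ E(V)` w.r.t. `≺_e`. -/
def IsGBE {K : Type} [Field K] {n : ℕ} (es : (Fin n →₀ ℕ) → (Fin n →₀ ℕ) → Prop)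
    (δ : EV K n →ₗ[K] FA K n) (I : TwoSidedIdeal (EV K n)) (G : Set (EV K n)) : Prop :=
  (∀ g ∈ G, g ∈ I ∧ g ≠ 0) ∧
  TwoSidedIdeal.span { h | ∃ g ∈ G, ∃ A, IsLeadE es δ g A ∧ h = xF K A } = inE es δ I

/-- `G` is a minimal Gröbner basis of `I ⊆ E(V)` w.r.t. `≺_e`: moreover no leading
monomial of an element of `G` divides the leading monomial of another element. -/
def IsMinGBE {K : Type} [Field K] {n : ℕ} (es : (Fin n →₀ ℕ) → (Fin n →₀ ℕ) → Prop)
    (δ : EV K n →ₗ[K] FA K n) (I : TwoSidedIdeal (EV K n)) (G : Set (EV K n)) : Prop :=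
  IsGBE es δ I G ∧
  ∀ g ∈ G, ∀ g' ∈ G, g ≠ g' → ∀ A A', IsLeadE es δ g A → IsLeadE es δ g' A' → ¬ A ⊆ A'

/-- `I ⊆ E(V)` is a homogeneous ideal generated in degrees `≥ 2`: it is generated by
images of homogeneous elements of degree `≥ 2`. -/
def IsHomogGenInDegGE2 {K : Type} [Field K] {n : ℕ} (I : TwoSidedIdeal (EV K n)) : Prop :=
  ∃ S : Set (FA K n), (∀ f ∈ S, ∃ d, 2 ≤ d ∧ IsHomogOfDeg f d) ∧
    I = TwoSidedIdeal.span (piE K n '' S)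

/-- The action of an `n × n` matrix `g` on `K⟨X_1,…,X_n⟩` by the algebra endomorphism
determined by `X_i ↦ Σ_ℓ g_{ℓi} X_ℓ`. -/
noncomputable def actFA (K : Type) [Field K] {n : ℕ} (g : Matrix (Fin n) (Fin n) K) :
    FA K n →ₐ[K] FA K n :=
  MonoidAlgebra.lift K (FA K n) (Word n)
    (FreeMonoid.lift fun i => ∑ l : Fin n, g l i • Xv K l)

/-- The degree-`d` homogeneous component of a two-sided ideal of `K⟨X_1,…,X_n⟩`,
as a `K`-subspace. -/
def degComp {K : Type} [Field K] {n : ℕ} (c : TwoSidedIdeal (FA K n)) (d : ℕ) :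
    Submodule K (FA K n) where
  carrier := {f | f ∈ c ∧ IsHomogOfDeg f d}
  add_mem' := fun {a b} ha hb => ⟨c.add_mem ha.1 hb.1, fun w hw => by
    classical
    rcases Finset.mem_union.1 (Finsupp.support_add (show w ∈ (a.coeff + b.coeff).support from hw)) with h | h
    exacts [ha.2 w h, hb.2 w h]⟩
  zero_mem' := ⟨c.zero_mem, fun w hw => by simp at hw⟩
  smul_mem' := fun k f hf => ⟨by
      rw [Algebra.smul_def]
      exact c.mul_mem_left _ _ hf.1,
    fun w hw => hf.2 w (Finsupp.support_smul (show w ∈ (k • f.coeff).support from hw))⟩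

/-- A two-sided ideal of `K⟨X_1,…,X_n⟩` is homogeneous (for the grading by word length). -/
def IsHomogIdeal {K : Type} [Field K] {n : ℕ} (a : TwoSidedIdeal (FA K n)) : Prop :=
  ∀ f ∈ a, ∀ d : ℕ, MonoidAlgebra.ofCoeff (f.coeff.filter (fun w => (FreeMonoid.toList w).length = d)) ∈ a

/-- Evaluation of a polynomial in the matrix entries at an element of `GL_n(K)`. -/
noncomputable def evalGL {K : Type} [Field K] {n : ℕ}
    (p : MvPolynomial (Fin n × Fin n) K) (g : GL (Fin n) K) : K :=
  MvPolynomial.eval (fun q => (g : Matrix (Fin n) (Fin n) K) q.1 q.2) p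

/-- The image `g(a)` of a two-sided ideal under the action of a matrix `g`. -/
noncomputable def mapIdealFA (K : Type) [Field K] {n : ℕ} (g : Matrix (Fin n) (Fin n) K)
    (a : TwoSidedIdeal (FA K n)) : TwoSidedIdeal (FA K n) :=
  TwoSidedIdeal.span ((actFA K g) '' (a : Set (FA K n)))

/-- `b` is the generic initial ideal of `a` w.r.t. the order `r`: `b` is a monomial
ideal and there is a countable family of nonempty basic Zariski-open subsets of
`GL_n(K)` on whose (F_δ) intersection `in_r(g(a)) = b`. -/
def IsGin {K : Type} [Field K] {n : ℕ} (r : Word n → Word n → Prop)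
    (a b : TwoSidedIdeal (FA K n)) : Prop :=
  (∃ S : Set (Word n), b = TwoSidedIdeal.span (ofW K '' S)) ∧
  ∃ ps : ℕ → MvPolynomial (Fin n × Fin n) K,
    (∀ k, ∃ g : GL (Fin n) K, evalGL (ps k) g ≠ 0) ∧
    (∃ g : GL (Fin n) K, ∀ k, evalGL (ps k) g ≠ 0) ∧
    ∀ g : GL (Fin n) K, (∀ k, evalGL (ps k) g ≠ 0) →
      inIdeal r (mapIdealFA K (↑g) a) = b

/-- `bE` is the generic initial ideal of the ideal `I ⊆ E(V)` w.r.t. `≺_e`. -/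
def IsGinE {K : Type} [Field K] {n : ℕ} (es : (Fin n →₀ ℕ) → (Fin n →₀ ℕ) → Prop)
    (δ : EV K n →ₗ[K] FA K n) (I bE : TwoSidedIdeal (EV K n)) : Prop :=
  IsMonomialIdealE bE ∧
  ∃ ps : ℕ → MvPolynomial (Fin n × Fin n) K,
    (∀ k, ∃ g : GL (Fin n) K, evalGL (ps k) g ≠ 0) ∧
    (∃ g : GL (Fin n) K, ∀ k, evalGL (ps k) g ≠ 0) ∧
    ∀ g : GL (Fin n) K, (∀ k, evalGL (ps k) g ≠ 0) →
      ∀ gE : EV K n ≃+* EV K n, (∀ x, gE (piE K n x) = piE K n (actFA K (↑g) x)) →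
        inE es δ (TwoSidedIdeal.span (⇑gE '' (I : Set (EV K n)))) = bE


section AuxStmt10

variable {K : Type} [Field K] {n : ℕ}

lemma mySpanLe {R : Type*} [NonUnitalNonAssocRing R] {s : Set R} {I : TwoSidedIdeal R}
    (h : s ⊆ I) : TwoSidedIdeal.span s ≤ I := fun _ hx =>
  TwoSidedIdeal.mem_span_iff.mp hx I h

lemma myExistsPair (l : List (Fin n)) (hl : n + 1 ≤ l.length) :
    ∃ u a b v, l = u ++ a :: b :: v ∧ b ≤ a := by
  by_contra h
  push_neg at h
  have hch : l.IsChain (· < ·) := by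
    rw [List.isChain_iff_getElem]
    intro i hi
    have h1 : i < l.length := by omega
    have h2 : i + 1 < l.length := by omega
    have hdec : l = l.take i ++ l.get ⟨i, h1⟩ :: l.get ⟨i+1, h2⟩ :: l.drop (i+2) := by
      conv_lhs => rw [← List.take_append_drop i l]
      congr 1
      rw [List.drop_eq_getElem_cons h1, List.drop_eq_getElem_cons h2]
      simp
    exact h _ _ _ _ hdec
  have hnd : l.Nodup := List.Pairwise.imp ne_of_lt (List.isChain_iff_pairwise.mp hch)
  have := hnd.length_le_card
  simp at this
  omega

lemma myFactor (M : Word n) (hM : n + 1 ≤ (FreeMonoid.toList M).length) :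
    ∃ (u : List (Fin n)) (a b : Fin n) (v : List (Fin n)), b ≤ a ∧
      M = FreeMonoid.ofList u * (FreeMonoid.of a * FreeMonoid.of b) * FreeMonoid.ofList v := by
  obtain ⟨u, a, b, v, hdec, hba⟩ := myExistsPair (FreeMonoid.toList M) hM
  refine ⟨u, a, b, v, hba, FreeMonoid.toList.injective ?_⟩
  simp only [FreeMonoid.toList_mul, FreeMonoid.toList_of, FreeMonoid.toList_ofList, hdec]
  simp

lemma ofW_mul (u v : Word n) : ofW K (u * v) = ofW K u * ofW K v :=
  map_mul (MonoidAlgebra.of K (Word n)) u v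

lemma support_ofW (w : Word n) : (ofW K w).coeff.support = {w} := by
  rw [ofW, MonoidAlgebra.of_apply, MonoidAlgebra.coeff_single]
  exact Finsupp.support_single_ne_zero _ one_ne_zero

lemma pair_mem_inIdeal (hchar : (2 : K) ≠ 0)
    (es : (Fin n →₀ ℕ) → (Fin n →₀ ℕ) → Prop)
    (J : TwoSidedIdeal (FA K n)) (hCJ : antiCommIdeal K n ≤ J)
    {a b : Fin n} (hba : b ≤ a) :
    ofW K (FreeMonoid.of a * FreeMonoid.of b) ∈ inIdeal (precT es) J := by
  classical
  set w1 : Word n := FreeMonoid.of a * FreeMonoid.of b with hw1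
  set w2 : Word n := FreeMonoid.of b * FreeMonoid.of a with hw2
  set f : FA K n := Xv K b * Xv K a + Xv K a * Xv K b with hf
  have hfJ : f ∈ J := hCJ (TwoSidedIdeal.subset_span ⟨b, a, hba, rfl⟩)
  have hXX : ∀ i j : Fin n,
      Xv K i * Xv K j = MonoidAlgebra.single (FreeMonoid.of i * FreeMonoid.of j) (1 : K) := by
    intro i j
    rw [Xv, Xv, ofW, ofW, ← map_mul, MonoidAlgebra.of_apply]
  have hfval : f = MonoidAlgebra.single w2 (1 : K) + MonoidAlgebra.single w1 (1 : K) := by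
    rw [hf, hXX, hXX]
  rcases eq_or_lt_of_le hba with heq | hlt
  · -- a = b
    subst heq
    have hfval2 : f = MonoidAlgebra.single w1 (2 : K) := by
      rw [hfval]
      have : w2 = w1 := rfl
      rw [this, ← MonoidAlgebra.single_add]
      norm_num
    have hf0 : f ≠ 0 := by
      rw [hfval2]
      exact fun h => hchar (MonoidAlgebra.single_eq_zero.mp h)
    have hsupp : f.coeff.support = {w1} := by
      rw [hfval2, MonoidAlgebra.coeff_single]; exact Finsupp.support_single_ne_zero _ hchar
    have hlead : IsLeadWord (precT es) f w1 := by
      constructor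
      · rw [hsupp]; exact Finset.mem_singleton_self _
      · intro m' hm' hne
        rw [hsupp, Finset.mem_singleton] at hm'
        exact absurd hm' hne
    exact TwoSidedIdeal.subset_span ⟨f, w1, hfJ, hf0, hlead, rfl⟩
  · -- b < a
    have hne : b ≠ a := ne_of_lt hlt
    have hw12 : w1 ≠ w2 := by
      intro h
      have : ([a, b] : List (Fin n)) = [b, a] := congrArg FreeMonoid.toList h
      simp at this
      exact hne this.1.symm
    have hfw1 : f.coeff w1 = 1 := by
      rw [hfval, MonoidAlgebra.coeff_add, MonoidAlgebra.coeff_single, MonoidAlgebra.coeff_single]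
      rw [Finsupp.add_apply, Finsupp.single_apply, Finsupp.single_apply,
        if_neg hw12.symm, if_pos rfl]
      simp
    have hf0 : f ≠ 0 := by
      intro h0
      rw [h0] at hfw1
      simp at hfw1
    have hsupp : f.coeff.support ⊆ {w2, w1} := by
      rw [hfval, MonoidAlgebra.coeff_add, MonoidAlgebra.coeff_single, MonoidAlgebra.coeff_single]
      refine (Finsupp.support_add).trans ?_
      apply Finset.union_subset
      · exact (Finsupp.support_single_subset).trans (by simp)
      · exact (Finsupp.support_single_subset).trans (by simp)
    have hsq1 : SqFreeWord w1 := by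
      show ([a, b] : List (Fin n)).Nodup
      simp [hne.symm]
    have hsq2 : SqFreeWord w2 := by
      show ([b, a] : List (Fin n)).Nodup
      simp [hne]
    have hlead : IsLeadWord (precT es) f w1 := by
      constructor
      · rw [Finsupp.mem_support_iff, hfw1]; exact one_ne_zero
      · intro m' hm' hne'
        have := hsupp hm'
        rw [Finset.mem_insert, Finset.mem_singleton] at this
        rcases this with h2 | h1
        · subst h2
          left
          refine ⟨hsq2, hsq1, Or.inr ⟨?_, ?_⟩⟩
          · show ([b, a] : List (Fin n)).toFinset = ([a, b] : List (Fin n)).toFinset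
            simp [Finset.pair_comm]
          · right
            exact ⟨rfl, List.Lex.rel hlt⟩
        · exact absurd h1 hne'
    exact TwoSidedIdeal.subset_span ⟨f, w1, hfJ, hf0, hlead, rfl⟩

end AuxStmt10

/-- Let `J ⊆ K⟨X_1,…,X_n⟩` be any two-sided ideal containing the
anti-commutator ideal `C`.  Then there exists `d ≥ 0` such that `in_{≺_t}(J)` contains
every word of length `≥ d`; consequently `in_{≺_t}(J)` is generated by its elements of
degree `< d`, and is finitely generated. -/
theorem initial_ideal_fg_of_contains_antiComm (K : Type) [Field K] (hchar : (2 : K) ≠ 0)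
    (n : ℕ) (hn : 1 ≤ n)
    (es : (Fin n →₀ ℕ) → (Fin n →₀ ℕ) → Prop) (hes : IsCommMonoidWellOrder n es)
    (J : TwoSidedIdeal (FA K n)) (hCJ : antiCommIdeal K n ≤ J) :
    ∃ d : ℕ,
      (∀ M : Word n, d ≤ (FreeMonoid.toList M).length →
        ofW K M ∈ inIdeal (precT es) J) ∧
      inIdeal (precT es) J =
        TwoSidedIdeal.span
          { f | f ∈ inIdeal (precT es) J ∧
              ∀ w ∈ f.coeff.support, (FreeMonoid.toList w).length < d } ∧
      ∃ S : Finset (FA K n), inIdeal (precT es) J = TwoSidedIdeal.span (↑S : Set (FA K n)) := by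
  classical
  set I := inIdeal (precT es) J with hI
  set d := n + 2 with hd
  -- every word of length ≥ n+1 lies in I
  have hbig : ∀ M : Word n, n + 1 ≤ (FreeMonoid.toList M).length → ofW K M ∈ I := by
    intro M hM
    obtain ⟨u, a, b, v, hba, hMeq⟩ := myFactor M hM
    rw [hMeq, ofW_mul, ofW_mul]
    exact I.mul_mem_right _ _
      (I.mul_mem_left _ _ (pair_mem_inIdeal hchar es J hCJ hba))
  -- key: I is contained in the span of any set containing its small monomials
  have key : ∀ S : Set (FA K n),
      (∀ m : Word n, (FreeMonoid.toList m).length < d → ofW K m ∈ I → ofW K m ∈ S) →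
      I ≤ TwoSidedIdeal.span S := by
    intro S hS
    refine mySpanLe ?_
    rintro g ⟨f, m, hfJ, hf0, hlead, rfl⟩
    have hmI : ofW K m ∈ I := TwoSidedIdeal.subset_span ⟨f, m, hfJ, hf0, hlead, rfl⟩
    show ofW K m ∈ TwoSidedIdeal.span S
    by_cases hm : (FreeMonoid.toList m).length < d
    · exact TwoSidedIdeal.subset_span (hS m hm hmI)
    · push_neg at hm
      obtain ⟨u, a, b, v, hba, hMeq⟩ := myFactor m (by omega)
      have hpairI : ofW K (FreeMonoid.of a * FreeMonoid.of b) ∈ I :=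
        pair_mem_inIdeal hchar es J hCJ hba
      have hpairlen : (FreeMonoid.toList (FreeMonoid.of a * FreeMonoid.of b)).length < d := by
        show ([a, b] : List (Fin n)).length < d
        simp only [List.length_cons, List.length_nil]
        omega
      have hpairS : ofW K (FreeMonoid.of a * FreeMonoid.of b) ∈ TwoSidedIdeal.span S :=
        TwoSidedIdeal.subset_span (hS _ hpairlen hpairI)
      rw [hMeq, ofW_mul, ofW_mul]
      exact (TwoSidedIdeal.span S).mul_mem_right _ _
        ((TwoSidedIdeal.span S).mul_mem_left _ _ hpairS)
  refine ⟨d, ?_, ?_, ?_⟩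
  · intro M hM
    exact hbig M (by omega)
  · refine le_antisymm (key _ ?_) (mySpanLe ?_)
    · intro m hm hmI
      refine ⟨hmI, ?_⟩
      intro w hw
      rw [support_ofW, Finset.mem_singleton] at hw
      subst hw
      exact hm
    · intro x hx
      exact hx.1
  · have hTfin : {m : Word n | (FreeMonoid.toList m).length < d ∧ ofW K m ∈ I}.Finite := by
      refine Set.Finite.subset ((List.finite_length_lt (Fin n) d).image FreeMonoid.ofList) ?_
      intro m hm
      exact ⟨FreeMonoid.toList m, hm.1, rfl⟩
    refine ⟨(hTfin.image (ofW K)).toFinset, ?_⟩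
    refine le_antisymm (key _ ?_) (mySpanLe ?_)
    · intro m hm hmI
      rw [Set.Finite.coe_toFinset]
      exact ⟨m, ⟨hm, hmI⟩, rfl⟩
    · intro x hx
      rw [Set.Finite.coe_toFinset] at hx
      obtain ⟨m, hm, rfl⟩ := hx
      exact hm.2
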